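/- Suppose v₁ and v₂ satisfy the subsystem dissipation constraints for subsystems 1 and 2 respectively, and suppose w_r : ℝ² × ℝᵐ → ℝ satisfies: w_r(π(ζ), k) ≥ 1 for every (t, ζ, k) ∈ [0,T] × Z × K such that v₁(t, proj₁(ζ), k) ≤ 0 and v₂(t, proj₂(ζ), k) ≤ 0. Then the forward reachable set of the full decomposed system is contained in the 1-superlevel set of w_r: for every k ∈ K, every admissible trajectory ζ of the full system, and every τ ∈ [0,T], one has w_r(π(ζ(τ)), k) ≥ 1. -/

import Mathlib

open Set MeasureTheory intervalIntegral

/-- An admissible trajectory of the full decomposed (self-contained-subsystem) system for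
parameter `k`.  The full state is `ζ = (z₁, z₂, z_s)` with `z₁ : Fin (n₁+1) → ℝ`,
`z₂ : Fin (n₂+1) → ℝ`, `z_s : Fin ns → ℝ` (the sizes `n₁+1, n₂+1` encode `n₁, n₂ ≥ 1`).
Absolute continuity with a.e. derivative
`f(t,ζ,k) + g(t,ζ,k) ∘ d(t)` is encoded by the componentwise integral representation,
with a measurable disturbance `d` valued in `[-1,1]` componentwise. -/
def IsAdmissibleFull {n₁ n₂ ns m : ℕ} (T : ℝ)
    (Z Z₀ : Set ((Fin (n₁+1) → ℝ) × (Fin (n₂+1) → ℝ) × (Fin ns → ℝ)))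
    (f₁ g₁ : ℝ × (Fin (n₁+1) → ℝ) × (Fin ns → ℝ) × (Fin m → ℝ) → (Fin (n₁+1) → ℝ))
    (f₂ g₂ : ℝ × (Fin (n₂+1) → ℝ) × (Fin ns → ℝ) × (Fin m → ℝ) → (Fin (n₂+1) → ℝ))
    (fs gs : ℝ × (Fin ns → ℝ) × (Fin m → ℝ) → (Fin ns → ℝ))
    (k : Fin m → ℝ)
    (ζ : ℝ → (Fin (n₁+1) → ℝ) × (Fin (n₂+1) → ℝ) × (Fin ns → ℝ)) : Prop :=
  (∀ t ∈ Icc (0:ℝ) T, ζ t ∈ Z) ∧ ζ 0 ∈ Z₀ ∧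
  ∃ d : ℝ → (Fin (n₁+1) → ℝ) × (Fin (n₂+1) → ℝ) × (Fin ns → ℝ),
    Measurable d ∧
    (∀ t i, (d t).1 i ∈ Icc (-1:ℝ) 1) ∧
    (∀ t i, (d t).2.1 i ∈ Icc (-1:ℝ) 1) ∧
    (∀ t i, (d t).2.2 i ∈ Icc (-1:ℝ) 1) ∧
    (∀ i, IntervalIntegrable (fun τ =>
      f₁ (τ, (ζ τ).1, (ζ τ).2.2, k) i + g₁ (τ, (ζ τ).1, (ζ τ).2.2, k) i * (d τ).1 i)
      volume 0 T) ∧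
    (∀ i, IntervalIntegrable (fun τ =>
      f₂ (τ, (ζ τ).2.1, (ζ τ).2.2, k) i + g₂ (τ, (ζ τ).2.1, (ζ τ).2.2, k) i * (d τ).2.1 i)
      volume 0 T) ∧
    (∀ i, IntervalIntegrable (fun τ =>
      fs (τ, (ζ τ).2.2, k) i + gs (τ, (ζ τ).2.2, k) i * (d τ).2.2 i) volume 0 T) ∧
    (∀ t ∈ Icc (0:ℝ) T, ∀ i, (ζ t).1 i = (ζ 0).1 i + ∫ τ in (0:ℝ)..t,
      (f₁ (τ, (ζ τ).1, (ζ τ).2.2, k) i + g₁ (τ, (ζ τ).1, (ζ τ).2.2, k) i * (d τ).1 i)) ∧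
    (∀ t ∈ Icc (0:ℝ) T, ∀ i, (ζ t).2.1 i = (ζ 0).2.1 i + ∫ τ in (0:ℝ)..t,
      (f₂ (τ, (ζ τ).2.1, (ζ τ).2.2, k) i + g₂ (τ, (ζ τ).2.1, (ζ τ).2.2, k) i * (d τ).2.1 i)) ∧
    (∀ t ∈ Icc (0:ℝ) T, ∀ i, (ζ t).2.2 i = (ζ 0).2.2 i + ∫ τ in (0:ℝ)..t,
      (fs (τ, (ζ τ).2.2, k) i + gs (τ, (ζ τ).2.2, k) i * (d τ).2.2 i))

/-- `v_i` satisfies the subsystem dissipation constraints for the subsystem with own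
dynamics `(fi, gi)` and shared dynamics `(fs, gs)`, on `[0,T] × Zi × K` with initial set
`Z0i`. -/
def SubsysDissipation {ni ns m : ℕ} (T : ℝ)
    (Zi Z0i : Set ((Fin ni → ℝ) × (Fin ns → ℝ))) (K : Set (Fin m → ℝ))
    (fi gi : ℝ × (Fin ni → ℝ) × (Fin ns → ℝ) × (Fin m → ℝ) → (Fin ni → ℝ))
    (fs gs : ℝ × (Fin ns → ℝ) × (Fin m → ℝ) → (Fin ns → ℝ))
    (vi : ℝ × ((Fin ni → ℝ) × (Fin ns → ℝ)) × (Fin m → ℝ) → ℝ) : Prop :=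
  ContDiff ℝ 1 vi ∧
  (∀ t ∈ Icc (0:ℝ) T, ∀ zi : Fin ni → ℝ, ∀ zs : Fin ns → ℝ, (zi, zs) ∈ Zi →
    ∀ k ∈ K, ∀ δi : Fin ni → ℝ, ∀ δs : Fin ns → ℝ,
    (∀ i, δi i ∈ Icc (-1:ℝ) 1) → (∀ i, δs i ∈ Icc (-1:ℝ) 1) →
    fderiv ℝ vi (t, (zi, zs), k)
      (1, ((fun i => fi (t, zi, zs, k) i + gi (t, zi, zs, k) i * δi i),
           (fun i => fs (t, zs, k) i + gs (t, zs, k) i * δs i)), 0) ≤ 0) ∧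
  (∀ z ∈ Z0i, ∀ k ∈ K, vi (0, z, k) ≤ 0)

set_option maxHeartbeats 1000000

lemma clm_decomp {ni ns m : ℕ}
    (L : (ℝ × ((Fin ni → ℝ) × (Fin ns → ℝ)) × (Fin m → ℝ)) →L[ℝ] ℝ)
    (a : ℝ) (p : Fin ni → ℝ) (q : Fin ns → ℝ) :
    L (a, (p, q), 0) = a * L (1, 0, 0)
      + (∑ i, p i * L (0, ((fun j => if i = j then (1:ℝ) else 0), 0), 0))
      + ∑ j, q j * L (0, (0, (fun j' => if j = j' then (1:ℝ) else 0)), 0) := by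
  have hsplit : ((a, (p, q), 0) : ℝ × ((Fin ni → ℝ) × (Fin ns → ℝ)) × (Fin m → ℝ))
      = (a, (0, 0), 0) + (0, (p, 0), 0) + (0, (0, q), 0) := by
    simp [Prod.ext_iff]
  have h1 : L (a, (0, 0), 0) = a * L (1, 0, 0) := by
    have : ((a, (0, 0), 0) : ℝ × ((Fin ni → ℝ) × (Fin ns → ℝ)) × (Fin m → ℝ))
        = a • (1, 0, 0) := by simp [Prod.ext_iff]
    rw [this, L.map_smul, smul_eq_mul]
  let J₁ : (Fin ni → ℝ) →ₗ[ℝ] ℝ :=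
    { toFun := fun p => L (0, (p, 0), 0)
      map_add' := by
        intro x y
        show L (0, (x + y, 0), 0) = L (0, (x, 0), 0) + L (0, (y, 0), 0)
        rw [show ((0:ℝ), (x + y, (0 : Fin ns → ℝ)), (0 : Fin m → ℝ))
          = (0, (x, 0), 0) + (0, (y, 0), 0) by simp [Prod.ext_iff], L.map_add]
      map_smul' := by
        intro c x
        show L (0, (c • x, 0), 0) = c • L (0, (x, 0), 0)
        rw [show ((0:ℝ), (c • x, (0 : Fin ns → ℝ)), (0 : Fin m → ℝ))
          = c • (0, (x, 0), 0) by simp [Prod.ext_iff], L.map_smul] }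
  let J₂ : (Fin ns → ℝ) →ₗ[ℝ] ℝ :=
    { toFun := fun q => L (0, (0, q), 0)
      map_add' := by
        intro x y
        show L (0, (0, x + y), 0) = L (0, (0, x), 0) + L (0, (0, y), 0)
        rw [show ((0:ℝ), ((0 : Fin ni → ℝ), x + y), (0 : Fin m → ℝ))
          = (0, (0, x), 0) + (0, (0, y), 0) by simp [Prod.ext_iff], L.map_add]
      map_smul' := by
        intro c x
        show L (0, (0, c • x), 0) = c • L (0, (0, x), 0)
        rw [show ((0:ℝ), ((0 : Fin ni → ℝ), c • x), (0 : Fin m → ℝ))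
          = c • (0, (0, x), 0) by simp [Prod.ext_iff], L.map_smul] }
  have h2 : L (0, (p, 0), 0) = ∑ i, p i * L (0, ((fun j => if i = j then (1:ℝ) else 0), 0), 0) := by
    have := LinearMap.pi_apply_eq_sum_univ J₁ p
    simpa [J₁, smul_eq_mul] using this
  have h3 : L (0, (0, q), 0) = ∑ j, q j * L (0, (0, (fun j' => if j = j' then (1:ℝ) else 0)), 0) := by
    have := LinearMap.pi_apply_eq_sum_univ J₂ q
    simpa [J₂, smul_eq_mul] using this
  rw [hsplit, map_add, map_add, h1, h2, h3]

lemma core_nonpos {ni ns m : ℕ} {T M : ℝ} (hT : 0 < T)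
    (v : ℝ × ((Fin ni → ℝ) × (Fin ns → ℝ)) × (Fin m → ℝ) → ℝ)
    (hv : ContDiff ℝ 1 v)
    (k : Fin m → ℝ)
    (z : ℝ → Fin ni → ℝ) (zs : ℝ → Fin ns → ℝ)
    (F : Fin ni → ℝ → ℝ) (Fs : Fin ns → ℝ → ℝ)
    (hM1 : 1 ≤ M)
    (hbF : ∀ τ ∈ Icc (0:ℝ) T, ∀ i, |F i τ| ≤ M)
    (hbFs : ∀ τ ∈ Icc (0:ℝ) T, ∀ j, |Fs j τ| ≤ M)
    (hint : ∀ i, IntervalIntegrable (F i) volume 0 T)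
    (hints : ∀ j, IntervalIntegrable (Fs j) volume 0 T)
    (hrep : ∀ t ∈ Icc (0:ℝ) T, ∀ i, z t i = z 0 i + ∫ τ in (0:ℝ)..t, F i τ)
    (hreps : ∀ t ∈ Icc (0:ℝ) T, ∀ j, zs t j = zs 0 j + ∫ τ in (0:ℝ)..t, Fs j τ)
    (hdiss : ∀ τ ∈ Icc (0:ℝ) T,
      fderiv ℝ v (τ, (z τ, zs τ), k)
        (1, ((fun i => F i τ), (fun j => Fs j τ)), 0) ≤ 0)
    (h0 : v (0, (z 0, zs 0), k) ≤ 0) :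
    ∀ τ ∈ Icc (0:ℝ) T, v (τ, (z τ, zs τ), k) ≤ 0 := by
  have hM0 : (0:ℝ) < M := lt_of_lt_of_le one_pos hM1
  set γ : ℝ → ℝ × ((Fin ni → ℝ) × (Fin ns → ℝ)) × (Fin m → ℝ) :=
    fun t => (t, (z t, zs t), k) with hγ
  set φ : ℝ → ℝ := fun t => v (γ t) with hφ
  have hIccuIcc : uIcc (0:ℝ) T = Icc 0 T := uIcc_of_le hT.le
  -- subinterval integrability
  have hsub : ∀ t ∈ Icc (0:ℝ) T, ∀ t' ∈ Icc (0:ℝ) T, uIcc t t' ⊆ uIcc (0:ℝ) T := by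
    intro t ht t' ht' x hx
    rw [hIccuIcc]
    rcases le_total t t' with h | h
    · rw [uIcc_of_le h] at hx
      exact ⟨le_trans ht.1 hx.1, le_trans hx.2 ht'.2⟩
    · rw [uIcc_of_ge h] at hx
      exact ⟨le_trans ht'.1 hx.1, le_trans hx.2 ht.2⟩
  -- continuity of the trajectory
  have hzc : ∀ i, ContinuousOn (fun t => z t i) (Icc 0 T) := by
    intro i
    have := continuousOn_primitive_interval' (μ := volume) (hint i)
      (by rw [hIccuIcc]; exact ⟨le_refl _, hT.le⟩)
    rw [hIccuIcc] at this
    exact (continuousOn_const.add this).congr (fun t ht => hrep t ht i)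
  have hzsc : ∀ j, ContinuousOn (fun t => zs t j) (Icc 0 T) := by
    intro j
    have := continuousOn_primitive_interval' (μ := volume) (hints j)
      (by rw [hIccuIcc]; exact ⟨le_refl _, hT.le⟩)
    rw [hIccuIcc] at this
    exact (continuousOn_const.add this).congr (fun t ht => hreps t ht j)
  have hγc : ContinuousOn γ (Icc 0 T) :=
    continuousOn_id.prodMk (((continuousOn_pi.2 hzc).prodMk (continuousOn_pi.2 hzsc)).prodMk
      continuousOn_const)
  -- increments
  have hΔ : ∀ t ∈ Icc (0:ℝ) T, ∀ t' ∈ Icc (0:ℝ) T, ∀ i,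
      z t' i - z t i = ∫ τ in t..t', F i τ := by
    intro t ht t' ht' i
    rw [hrep t' ht' i, hrep t ht i, add_sub_add_left_eq_sub]
    exact integral_interval_sub_left ((hint i).mono_set (hsub 0 (left_mem_Icc.2 hT.le) t' ht'))
      ((hint i).mono_set (hsub 0 (left_mem_Icc.2 hT.le) t ht))
  have hΔs : ∀ t ∈ Icc (0:ℝ) T, ∀ t' ∈ Icc (0:ℝ) T, ∀ j,
      zs t' j - zs t j = ∫ τ in t..t', Fs j τ := by
    intro t ht t' ht' j
    rw [hreps t' ht' j, hreps t ht j, add_sub_add_left_eq_sub]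
    exact integral_interval_sub_left ((hints j).mono_set (hsub 0 (left_mem_Icc.2 hT.le) t' ht'))
      ((hints j).mono_set (hsub 0 (left_mem_Icc.2 hT.le) t ht))
  -- Lipschitz bound on γ
  have hLip : ∀ t ∈ Icc (0:ℝ) T, ∀ t' ∈ Icc (0:ℝ) T, t ≤ t' →
      ‖γ t' - γ t‖ ≤ M * (t' - t) := by
    intro t ht t' ht' htt'
    have hIs : uIoc t t' ⊆ Icc (0:ℝ) T := by
      intro x hx
      rw [uIoc_of_le htt'] at hx
      exact ⟨le_trans ht.1 hx.1.le, le_trans hx.2 ht'.2⟩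
    have h0M : (0:ℝ) ≤ M * (t' - t) := mul_nonneg hM0.le (by linarith)
    have hγd : γ t' - γ t = (t' - t, (z t' - z t, zs t' - zs t), 0) := by
      simp [hγ, Prod.ext_iff]
    rw [hγd, Prod.norm_def, Prod.norm_def, Prod.norm_def]
    have e1 : ‖t' - t‖ ≤ M * (t' - t) := by
      rw [Real.norm_eq_abs, abs_of_nonneg (by linarith)]
      nlinarith
    have e2 : ‖z t' - z t‖ ≤ M * (t' - t) := by
      refine (pi_norm_le_iff_of_nonneg h0M).2 fun i => ?_
      have : (z t' - z t) i = ∫ τ in t..t', F i τ := by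
        rw [Pi.sub_apply]; exact hΔ t ht t' ht' i
      rw [Real.norm_eq_abs, this]
      have := intervalIntegral.norm_integral_le_of_norm_le_const
        (C := M) (f := F i) (a := t) (b := t')
        (fun x hx => by rw [Real.norm_eq_abs]; exact hbF x (hIs hx) i)
      rw [Real.norm_eq_abs] at this
      calc |∫ τ in t..t', F i τ| ≤ M * |t' - t| := this
        _ = M * (t' - t) := by rw [abs_of_nonneg (by linarith)]
    have e3 : ‖zs t' - zs t‖ ≤ M * (t' - t) := by
      refine (pi_norm_le_iff_of_nonneg h0M).2 fun j => ?_
      have : (zs t' - zs t) j = ∫ τ in t..t', Fs j τ := by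
        rw [Pi.sub_apply]; exact hΔs t ht t' ht' j
      rw [Real.norm_eq_abs, this]
      have := intervalIntegral.norm_integral_le_of_norm_le_const
        (C := M) (f := Fs j) (a := t) (b := t')
        (fun x hx => by rw [Real.norm_eq_abs]; exact hbFs x (hIs hx) j)
      rw [Real.norm_eq_abs] at this
      calc |∫ τ in t..t', Fs j τ| ≤ M * |t' - t| := this
        _ = M * (t' - t) := by rw [abs_of_nonneg (by linarith)]
    exact max_le e1 (max_le (max_le e2 e3) (by simpa using h0M))
  -- norm bound for the velocity vector
  have hVb : ∀ τ ∈ Icc (0:ℝ) T,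
      ‖((1:ℝ), ((fun i => F i τ), (fun j => Fs j τ)),
        (0 : Fin m → ℝ))‖ ≤ M := by
    intro τ hτ
    rw [Prod.norm_def, Prod.norm_def, Prod.norm_def]
    refine max_le (by simpa using hM1) (max_le (max_le ?_ ?_) (by simp [hM0.le]))
    · exact (pi_norm_le_iff_of_nonneg hM0.le).2 fun i => by
        simpa [Real.norm_eq_abs] using hbF τ hτ i
    · exact (pi_norm_le_iff_of_nonneg hM0.le).2 fun j => by
        simpa [Real.norm_eq_abs] using hbFs τ hτ j
  -- the key slope estimate
  have key : ∀ ε > (0:ℝ), ∀ t ∈ Ico (0:ℝ) T,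
      ∀ᶠ t' in nhdsWithin t (Ioi t), slope φ t t' ≤ ε / 2 := by
    intro ε hε t ht
    have htIcc : t ∈ Icc (0:ℝ) T := ⟨ht.1, ht.2.le⟩
    set L := fderiv ℝ v (γ t) with hL
    set ε₁ := ε / (4 * M) with hε₁
    have hε₁0 : 0 < ε₁ := by positivity
    have hfc : ContinuousAt (fderiv ℝ v) (γ t) :=
      (hv.continuous_fderiv one_ne_zero).continuousAt
    obtain ⟨δ, hδ0, hδ⟩ : ∃ δ > 0, ∀ x, dist x (γ t) < δ →
        dist (fderiv ℝ v x) L < ε₁ := by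
      have := Metric.continuousAt_iff.1 hfc ε₁ hε₁0
      obtain ⟨δ, hδ0, hδ⟩ := this
      exact ⟨δ, hδ0, fun x hx => hδ hx⟩
    have hh₀0 : 0 < δ / (2 * M) := by positivity
    have hmem' : Ioc t (min T (t + δ / (2 * M))) ∈ nhdsWithin t (Ioi t) :=
      Ioc_mem_nhdsGT_of_mem ⟨le_refl t, lt_min ht.2 (by linarith)⟩
    filter_upwards [hmem'] with t' ht'
    have htt' : t < t' := ht'.1
    have ht'T : t' ≤ T := le_trans ht'.2 (min_le_left _ _)
    have ht'h : t' - t ≤ δ / (2 * M) := by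
      have := le_trans ht'.2 (min_le_right _ _); linarith
    have ht'Icc : t' ∈ Icc (0:ℝ) T := ⟨by linarith [ht.1], ht'T⟩
    have hdistγ : ∀ τ ∈ Icc t t', dist (γ τ) (γ t) < δ := by
      intro τ hτ
      have hτIcc : τ ∈ Icc (0:ℝ) T := ⟨le_trans ht.1 hτ.1, le_trans hτ.2 ht'T⟩
      have h1 : ‖γ τ - γ t‖ ≤ M * (τ - t) := hLip t htIcc τ hτIcc hτ.1
      have h2 : M * (τ - t) ≤ M * (t' - t) :=
        mul_le_mul_of_nonneg_left (by linarith [hτ.2]) hM0.le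
      have h3 : M * (t' - t) ≤ δ / 2 := by
        calc M * (t' - t) ≤ M * (δ / (2 * M)) :=
          mul_le_mul_of_nonneg_left ht'h hM0.le
        _ = δ / 2 := by field_simp
      rw [dist_eq_norm]; linarith
    -- mean value estimate on the closed ball
    have hball : γ t' ∈ Metric.closedBall (γ t) (M * (t' - t)) := by
      rw [Metric.mem_closedBall, dist_eq_norm]
      exact hLip t htIcc t' ht'Icc htt'.le
    have hmvt : ‖v (γ t') - v (γ t) - L (γ t' - γ t)‖ ≤ ε₁ * ‖γ t' - γ t‖ := by
      refine Convex.norm_image_sub_le_of_norm_fderiv_le'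
        (fun x _ => (hv.differentiable one_ne_zero).differentiableAt)
        (fun x hx => ?_) (convex_closedBall _ _)
        (Metric.mem_closedBall_self (by nlinarith)) hball
      have hxd : dist x (γ t) < δ := by
        have h1 : dist x (γ t) ≤ M * (t' - t) := Metric.mem_closedBall.1 hx
        have h3 : M * (t' - t) ≤ δ / 2 := by
          calc M * (t' - t) ≤ M * (δ / (2 * M)) :=
            mul_le_mul_of_nonneg_left ht'h hM0.le
          _ = δ / 2 := by field_simp
        linarith
      have := hδ x hxd
      rw [dist_eq_norm] at this
      exact this.le
    have hφd : φ t' - φ t ≤ L (γ t' - γ t) + ε₁ * (M * (t' - t)) := by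
      have h1 : φ t' - φ t - L (γ t' - γ t) ≤ ε₁ * ‖γ t' - γ t‖ :=
        le_trans (le_abs_self _) (by simpa [hφ, Real.norm_eq_abs] using hmvt)
      have h2 : ε₁ * ‖γ t' - γ t‖ ≤ ε₁ * (M * (t' - t)) :=
        mul_le_mul_of_nonneg_left (hLip t htIcc t' ht'Icc htt'.le) hε₁0.le
      linarith
    -- rewrite L (γ t' - γ t) as an integral
    set G : ℝ → ℝ := fun τ => L (1, 0, 0)
      + ((∑ i, F i τ * L (0, ((fun j => if i = j then (1:ℝ) else 0), 0), 0))
        + ∑ j, Fs j τ * L (0, (0, (fun j' => if j = j' then (1:ℝ) else 0)), 0)) with hG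
    have hsubtt' : ∀ i, IntervalIntegrable (F i) volume t t' :=
      fun i => (hint i).mono_set (hsub t htIcc t' ht'Icc)
    have hsubtt's : ∀ j, IntervalIntegrable (Fs j) volume t t' :=
      fun j => (hints j).mono_set (hsub t htIcc t' ht'Icc)
    have hsum1 : IntervalIntegrable
        (fun τ => ∑ i, F i τ * L (0, ((fun j => if i = j then (1:ℝ) else 0), 0), 0))
        volume t t' := by
      have heq : (fun τ => ∑ i, F i τ * L (0, ((fun j => if i = j then (1:ℝ) else 0), 0), 0))
          = ∑ i, (fun τ => F i τ * L (0, ((fun j => if i = j then (1:ℝ) else 0), 0), 0)) := by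
        funext τ; rw [Finset.sum_apply]
      rw [heq]
      exact IntervalIntegrable.sum _ fun i _ => (hsubtt' i).mul_const _
    have hsum2 : IntervalIntegrable
        (fun τ => ∑ j, Fs j τ * L (0, (0, (fun j' => if j = j' then (1:ℝ) else 0)), 0))
        volume t t' := by
      have heq : (fun τ => ∑ j, Fs j τ * L (0, (0, (fun j' => if j = j' then (1:ℝ) else 0)), 0))
          = ∑ j, (fun τ => Fs j τ * L (0, (0, (fun j' => if j = j' then (1:ℝ) else 0)), 0)) := by
        funext τ; rw [Finset.sum_apply]
      rw [heq]
      exact IntervalIntegrable.sum _ fun j _ => (hsubtt's j).mul_const _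
    have hGint : IntervalIntegrable G volume t t' := by
      rw [hG]
      exact intervalIntegrable_const.add (hsum1.add hsum2)
    have hLI : L (γ t' - γ t) = ∫ τ in t..t', G τ := by
      have hγd : γ t' - γ t = (t' - t, (z t' - z t, zs t' - zs t), 0) := by
        simp [hγ, Prod.ext_iff]
      have h1 : L (γ t' - γ t) = (t' - t) * L (1, 0, 0)
          + (∑ i, (∫ τ in t..t', F i τ)
              * L (0, ((fun j => if i = j then (1:ℝ) else 0), 0), 0))
          + ∑ j, (∫ τ in t..t', Fs j τ)
              * L (0, (0, (fun j' => if j = j' then (1:ℝ) else 0)), 0) := by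
        rw [hγd, clm_decomp]
        congr 1
        · congr 1
          refine Finset.sum_congr rfl fun i _ => ?_
          rw [Pi.sub_apply, hΔ t htIcc t' ht'Icc i]
        · refine Finset.sum_congr rfl fun j _ => ?_
          rw [Pi.sub_apply, hΔs t htIcc t' ht'Icc j]
      have h2 : (∫ τ in t..t', G τ) = (t' - t) • L (1, 0, 0)
          + ((∑ i, (∫ τ in t..t', F i τ)
              * L (0, ((fun j => if i = j then (1:ℝ) else 0), 0), 0))
            + ∑ j, (∫ τ in t..t', Fs j τ)
              * L (0, (0, (fun j' => if j = j' then (1:ℝ) else 0)), 0)) := by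
        rw [hG, intervalIntegral.integral_add intervalIntegrable_const (hsum1.add hsum2),
          intervalIntegral.integral_add hsum1 hsum2,
          intervalIntegral.integral_finset_sum (fun i _ => (hsubtt' i).mul_const _),
          intervalIntegral.integral_finset_sum (fun j _ => (hsubtt's j).mul_const _),
          intervalIntegral.integral_const]
        simp only [intervalIntegral.integral_mul_const]
      rw [h1, h2, smul_eq_mul]
      ring
    -- bound the integrand pointwise
    have hGle : ∀ τ ∈ Icc t t', G τ ≤ ε₁ * M := by
      intro τ hτ
      have hτIcc : τ ∈ Icc (0:ℝ) T := ⟨le_trans ht.1 hτ.1, le_trans hτ.2 ht'T⟩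
      have hD : fderiv ℝ v (γ τ)
          (1, ((fun i => F i τ), (fun j => Fs j τ)), 0) ≤ 0 := hdiss τ hτIcc
      have hGτ : G τ = L (1, ((fun i => F i τ), (fun j => Fs j τ)), 0) := by
        rw [hG]
        rw [clm_decomp L 1 (fun i => F i τ) (fun j => Fs j τ)]
        ring
      have hdiff : L (1, ((fun i => F i τ), (fun j => Fs j τ)), 0)
          - fderiv ℝ v (γ τ) (1, ((fun i => F i τ), (fun j => Fs j τ)), 0)
          ≤ ε₁ * M := by
        have h1 : ‖(L - fderiv ℝ v (γ τ))
            (1, ((fun i => F i τ), (fun j => Fs j τ)), 0)‖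
            ≤ ‖L - fderiv ℝ v (γ τ)‖ *
              ‖((1:ℝ), ((fun i => F i τ), (fun j => Fs j τ)), (0 : Fin m → ℝ))‖ :=
          ContinuousLinearMap.le_opNorm _ _
        have h2 : ‖L - fderiv ℝ v (γ τ)‖ ≤ ε₁ := by
          have := hδ (γ τ) (hdistγ τ hτ)
          rw [dist_eq_norm] at this
          rw [show L - fderiv ℝ v (γ τ) = -(fderiv ℝ v (γ τ) - L) by abel, norm_neg]
          exact this.le
        have h3 := hVb τ hτIcc
        have h4 : ‖L - fderiv ℝ v (γ τ)‖ *
            ‖((1:ℝ), ((fun i => F i τ), (fun j => Fs j τ)), (0 : Fin m → ℝ))‖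
            ≤ ε₁ * M := mul_le_mul h2 h3 (norm_nonneg _) hε₁0.le
        have h5 : (L - fderiv ℝ v (γ τ))
            (1, ((fun i => F i τ), (fun j => Fs j τ)), 0)
            = L (1, ((fun i => F i τ), (fun j => Fs j τ)), 0)
            - fderiv ℝ v (γ τ) (1, ((fun i => F i τ), (fun j => Fs j τ)), 0) := rfl
        calc L (1, ((fun i => F i τ), (fun j => Fs j τ)), 0)
            - fderiv ℝ v (γ τ) (1, ((fun i => F i τ), (fun j => Fs j τ)), 0)
            = (L - fderiv ℝ v (γ τ))
              (1, ((fun i => F i τ), (fun j => Fs j τ)), 0) := h5.symm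
          _ ≤ ‖(L - fderiv ℝ v (γ τ))
              (1, ((fun i => F i τ), (fun j => Fs j τ)), 0)‖ := le_abs_self _
          _ ≤ _ := le_trans h1 h4
      rw [hGτ]
      linarith
    have hIle : (∫ τ in t..t', G τ) ≤ ε₁ * M * (t' - t) := by
      calc (∫ τ in t..t', G τ) ≤ ∫ _ in t..t', ε₁ * M :=
        intervalIntegral.integral_mono_on htt'.le hGint intervalIntegrable_const hGle
      _ = ε₁ * M * (t' - t) := by
        rw [intervalIntegral.integral_const, smul_eq_mul]; ring
    -- put it together
    have htot : φ t' - φ t ≤ (ε / 2) * (t' - t) := by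
      have h1 : φ t' - φ t ≤ ε₁ * M * (t' - t) + ε₁ * (M * (t' - t)) := by
        rw [hLI] at hφd; linarith
      have h2 : ε₁ * M = ε / 4 := by
        rw [hε₁]; field_simp
      nlinarith [sub_pos.2 htt']
    have hne : t' - t ≠ 0 := ne_of_gt (sub_pos.2 htt')
    have hne' : t - t' ≠ 0 := by intro h; apply hne; linarith [sub_eq_zero.1 h]
    have hslope : slope φ t t' = (φ t' - φ t) / (t' - t) := by
      rw [slope_def_field]
    rw [hslope, div_le_iff₀ (sub_pos.2 htt')]
    linarith [htot]
  -- fencing argument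
  have hφc : ContinuousOn φ (Icc 0 T) := hv.continuous.comp_continuousOn hγc
  have main : ∀ ε > (0:ℝ), ∀ x ∈ Icc (0:ℝ) T, φ x ≤ φ 0 + ε * x := by
    intro ε hε
    intro x hx
    refine image_le_of_liminf_slope_right_le_deriv_boundary (f := φ) (a := 0) (b := T)
      hφc (B := fun x => φ 0 + ε * x) (B' := fun _ => ε) (by simp)
      (continuousOn_const.add (continuousOn_const.mul continuousOn_id))
      (fun y hy => by
        simpa using ((hasDerivWithinAt_id y (Ici y)).const_mul ε).const_add (φ 0))
      (fun y hy r hr => ?_) hx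
    exact (((key ε hε y hy).mono (fun t'' h => lt_of_le_of_lt h (by linarith))).frequently)
  intro τ hτ
  have hfin : φ τ ≤ φ 0 := by
    refine le_of_forall_pos_le_add ?_
    intro ε' hε'
    have hε : 0 < ε' / T := by positivity
    have h1 := main (ε' / T) hε τ hτ
    have h2 : (ε' / T) * τ ≤ ε' := by
      calc (ε' / T) * τ ≤ (ε' / T) * T := mul_le_mul_of_nonneg_left hτ.2 hε.le
      _ = ε' := by field_simp
    linarith
  have h00 : φ 0 ≤ 0 := by simpa [hφ, hγ] using h0
  have hτeq : φ τ = v (τ, (z τ, zs τ), k) := by simp [hφ, hγ]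
  linarith [hτeq ▸ hfin]

lemma exists_rhs_bound {ni ns m : ℕ} {T : ℝ} (hT : 0 < T)
    (fi gi : ℝ × (Fin ni → ℝ) × (Fin ns → ℝ) × (Fin m → ℝ) → (Fin ni → ℝ))
    (fs gs : ℝ × (Fin ns → ℝ) × (Fin m → ℝ) → (Fin ns → ℝ))
    (hfi : Continuous fi) (hgi : Continuous gi) (hfs : Continuous fs) (hgs : Continuous gs)
    (z : ℝ → Fin ni → ℝ) (zs : ℝ → Fin ns → ℝ) (k : Fin m → ℝ)
    (hzpc : ContinuousOn z (Icc 0 T)) (hzspc : ContinuousOn zs (Icc 0 T))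
    (d : ℝ → Fin ni → ℝ) (ds : ℝ → Fin ns → ℝ)
    (hdb : ∀ t i, d t i ∈ Icc (-1:ℝ) 1) (hdsb : ∀ t i, ds t i ∈ Icc (-1:ℝ) 1) :
    ∃ M : ℝ, 1 ≤ M ∧
      (∀ τ ∈ Icc (0:ℝ) T, ∀ i,
        |fi (τ, z τ, zs τ, k) i + gi (τ, z τ, zs τ, k) i * d τ i| ≤ M) ∧
      (∀ τ ∈ Icc (0:ℝ) T, ∀ j,
        |fs (τ, zs τ, k) j + gs (τ, zs τ, k) j * ds τ j| ≤ M) := by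
  set c : ℝ → ℝ := fun τ => ‖fi (τ, z τ, zs τ, k)‖ + ‖gi (τ, z τ, zs τ, k)‖ +
    ‖fs (τ, zs τ, k)‖ + ‖gs (τ, zs τ, k)‖ + 1 with hc
  have hcc : ContinuousOn c (Icc 0 T) := by
    have h1 : ContinuousOn (fun τ : ℝ => (τ, z τ, zs τ, k)) (Icc 0 T) :=
      continuousOn_id.prodMk (hzpc.prodMk (hzspc.prodMk continuousOn_const))
    have h2 : ContinuousOn (fun τ : ℝ => (τ, zs τ, k)) (Icc 0 T) :=
      continuousOn_id.prodMk (hzspc.prodMk continuousOn_const)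
    exact (((((hfi.comp_continuousOn h1).norm.add
      (hgi.comp_continuousOn h1).norm).add
      (hfs.comp_continuousOn h2).norm).add
      (hgs.comp_continuousOn h2).norm).add continuousOn_const)
  obtain ⟨x₀, hx₀, hmax'⟩ := isCompact_Icc.exists_isMaxOn
    (nonempty_Icc.2 hT.le) hcc
  have hmax : ∀ y ∈ Icc (0:ℝ) T, c y ≤ c x₀ := fun y hy => hmax' hy
  refine ⟨c x₀, ?_, ?_, ?_⟩
  · have : 1 ≤ c 0 := by
      have : (0:ℝ) ≤ ‖fi (0, z 0, zs 0, k)‖ + ‖gi (0, z 0, zs 0, k)‖ +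
          ‖fs (0, zs 0, k)‖ + ‖gs (0, zs 0, k)‖ := by positivity
      simp only [hc]; linarith
    exact this.trans (hmax 0 ⟨le_refl _, hT.le⟩)
  · intro τ hτ i
    have hM := hmax τ hτ
    have h1 : |fi (τ, z τ, zs τ, k) i| ≤ ‖fi (τ, z τ, zs τ, k)‖ := by
      simpa [Real.norm_eq_abs] using norm_le_pi_norm (fi (τ, z τ, zs τ, k)) i
    have h2 : |gi (τ, z τ, zs τ, k) i| ≤ ‖gi (τ, z τ, zs τ, k)‖ := by
      simpa [Real.norm_eq_abs] using norm_le_pi_norm (gi (τ, z τ, zs τ, k)) i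
    have h3 : |d τ i| ≤ 1 := abs_le.2 ⟨(hdb τ i).1, (hdb τ i).2⟩
    have habs : |fi (τ, z τ, zs τ, k) i + gi (τ, z τ, zs τ, k) i * d τ i| ≤
        |fi (τ, z τ, zs τ, k) i| + |gi (τ, z τ, zs τ, k) i| * |d τ i| := by
      calc _ ≤ |fi (τ, z τ, zs τ, k) i| + |gi (τ, z τ, zs τ, k) i * d τ i| := abs_add_le _ _
      _ = _ := by rw [abs_mul]
    have h4 : |gi (τ, z τ, zs τ, k) i| * |d τ i| ≤ |gi (τ, z τ, zs τ, k) i| * 1 :=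
      mul_le_mul_of_nonneg_left h3 (abs_nonneg _)
    have hcτ : ‖fi (τ, z τ, zs τ, k)‖ + ‖gi (τ, z τ, zs τ, k)‖ ≤ c τ := by
      have : (0:ℝ) ≤ ‖fs (τ, zs τ, k)‖ + ‖gs (τ, zs τ, k)‖ := by positivity
      simp only [hc]; linarith
    nlinarith [hM]
  · intro τ hτ j
    have hM := hmax τ hτ
    have h1 : |fs (τ, zs τ, k) j| ≤ ‖fs (τ, zs τ, k)‖ := by
      simpa [Real.norm_eq_abs] using norm_le_pi_norm (fs (τ, zs τ, k)) j
    have h2 : |gs (τ, zs τ, k) j| ≤ ‖gs (τ, zs τ, k)‖ := by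
      simpa [Real.norm_eq_abs] using norm_le_pi_norm (gs (τ, zs τ, k)) j
    have h3 : |ds τ j| ≤ 1 := abs_le.2 ⟨(hdsb τ j).1, (hdsb τ j).2⟩
    have habs : |fs (τ, zs τ, k) j + gs (τ, zs τ, k) j * ds τ j| ≤
        |fs (τ, zs τ, k) j| + |gs (τ, zs τ, k) j| * |ds τ j| := by
      calc _ ≤ |fs (τ, zs τ, k) j| + |gs (τ, zs τ, k) j * ds τ j| := abs_add_le _ _
      _ = _ := by rw [abs_mul]
    have h4 : |gs (τ, zs τ, k) j| * |ds τ j| ≤ |gs (τ, zs τ, k) j| * 1 :=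
      mul_le_mul_of_nonneg_left h3 (abs_nonneg _)
    have hcτ : ‖fs (τ, zs τ, k)‖ + ‖gs (τ, zs τ, k)‖ ≤ c τ := by
      have : (0:ℝ) ≤ ‖fi (τ, z τ, zs τ, k)‖ + ‖gi (τ, z τ, zs τ, k)‖ := by positivity
      simp only [hc]; linarith
    nlinarith [hM]

lemma subsys_nonpos {ni ns m : ℕ} {T : ℝ} (hT : 0 < T)
    (Zi : Set ((Fin ni → ℝ) × (Fin ns → ℝ)))
    (fi gi : ℝ × (Fin ni → ℝ) × (Fin ns → ℝ) × (Fin m → ℝ) → (Fin ni → ℝ))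
    (fs gs : ℝ × (Fin ns → ℝ) × (Fin m → ℝ) → (Fin ns → ℝ))
    (hfi : Continuous fi) (hgi : Continuous gi) (hfs : Continuous fs) (hgs : Continuous gs)
    (v : ℝ × ((Fin ni → ℝ) × (Fin ns → ℝ)) × (Fin m → ℝ) → ℝ)
    (hv : ContDiff ℝ 1 v)
    (k : Fin m → ℝ)
    (hdiss : ∀ t ∈ Icc (0:ℝ) T, ∀ zi zs, (zi, zs) ∈ Zi →
      ∀ δi : Fin ni → ℝ, ∀ δs : Fin ns → ℝ,
      (∀ i, δi i ∈ Icc (-1:ℝ) 1) → (∀ i, δs i ∈ Icc (-1:ℝ) 1) →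
      fderiv ℝ v (t, (zi, zs), k)
        (1, ((fun i => fi (t, zi, zs, k) i + gi (t, zi, zs, k) i * δi i),
             (fun i => fs (t, zs, k) i + gs (t, zs, k) i * δs i)), 0) ≤ 0)
    (z : ℝ → Fin ni → ℝ) (zs : ℝ → Fin ns → ℝ)
    (hmem : ∀ t ∈ Icc (0:ℝ) T, (z t, zs t) ∈ Zi)
    (d : ℝ → Fin ni → ℝ) (ds : ℝ → Fin ns → ℝ)
    (hdb : ∀ t i, d t i ∈ Icc (-1:ℝ) 1) (hdsb : ∀ t i, ds t i ∈ Icc (-1:ℝ) 1)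
    (hint : ∀ i, IntervalIntegrable
      (fun τ => fi (τ, z τ, zs τ, k) i + gi (τ, z τ, zs τ, k) i * d τ i) volume 0 T)
    (hints : ∀ i, IntervalIntegrable
      (fun τ => fs (τ, zs τ, k) i + gs (τ, zs τ, k) i * ds τ i) volume 0 T)
    (hrep : ∀ t ∈ Icc (0:ℝ) T, ∀ i, z t i = z 0 i + ∫ τ in (0:ℝ)..t,
      (fi (τ, z τ, zs τ, k) i + gi (τ, z τ, zs τ, k) i * d τ i))
    (hreps : ∀ t ∈ Icc (0:ℝ) T, ∀ i, zs t i = zs 0 i + ∫ τ in (0:ℝ)..t,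
      (fs (τ, zs τ, k) i + gs (τ, zs τ, k) i * ds τ i))
    (h0 : v (0, (z 0, zs 0), k) ≤ 0) :
    ∀ τ ∈ Icc (0:ℝ) T, v (τ, (z τ, zs τ), k) ≤ 0 := by
  have hIccuIcc : uIcc (0:ℝ) T = Icc 0 T := uIcc_of_le hT.le
  -- continuity of the trajectory (needed for the bound)
  have hzc : ∀ i, ContinuousOn (fun t => z t i) (Icc 0 T) := by
    intro i
    have := continuousOn_primitive_interval' (μ := volume) (hint i)
      (by rw [hIccuIcc]; exact ⟨le_refl _, hT.le⟩)
    rw [hIccuIcc] at this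
    exact (continuousOn_const.add this).congr (fun t ht => hrep t ht i)
  have hzsc : ∀ j, ContinuousOn (fun t => zs t j) (Icc 0 T) := by
    intro j
    have := continuousOn_primitive_interval' (μ := volume) (hints j)
      (by rw [hIccuIcc]; exact ⟨le_refl _, hT.le⟩)
    rw [hIccuIcc] at this
    exact (continuousOn_const.add this).congr (fun t ht => hreps t ht j)
  obtain ⟨M, hM1, hbF, hbFs⟩ := exists_rhs_bound hT fi gi fs gs hfi hgi hfs hgs z zs k
    (continuousOn_pi.2 hzc) (continuousOn_pi.2 hzsc) d ds hdb hdsb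
  exact core_nonpos hT v hv k z zs
    (fun i τ => fi (τ, z τ, zs τ, k) i + gi (τ, z τ, zs τ, k) i * d τ i)
    (fun j τ => fs (τ, zs τ, k) j + gs (τ, zs τ, k) j * ds τ j)
    hM1 hbF hbFs hint hints hrep hreps
    (fun τ hτ => hdiss τ hτ (z τ) (zs τ) (hmem τ hτ) (d τ) (ds τ)
      (fun i => hdb τ i) (fun j => hdsb τ j))
    h0


/-- Reconstruction theorem: if `v₁, v₂` satisfy the subsystem dissipation constraints and
`w_r(π(ζ), k) ≥ 1` whenever `v₁(t, proj₁ ζ, k) ≤ 0` and `v₂(t, proj₂ ζ, k) ≤ 0` on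
`[0,T] × Z × K`, then the forward reachable set of the full system is contained in the
`1`-superlevel set of `w_r`. -/
theorem reconstruction_contains_frs {n₁ n₂ ns m : ℕ} {T : ℝ} (hT : 0 < T)
    (Z Z₀ : Set ((Fin (n₁+1) → ℝ) × (Fin (n₂+1) → ℝ) × (Fin ns → ℝ))) (hZ₀ : Z₀ ⊆ Z)
    (K : Set (Fin m → ℝ))
    (Z₁ Z01 : Set ((Fin (n₁+1) → ℝ) × (Fin ns → ℝ)))
    (Z₂ Z02 : Set ((Fin (n₂+1) → ℝ) × (Fin ns → ℝ)))
    (hZ₁ : (fun ζ : (Fin (n₁+1) → ℝ) × (Fin (n₂+1) → ℝ) × (Fin ns → ℝ) =>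
      (ζ.1, ζ.2.2)) '' Z ⊆ Z₁)
    (hZ01 : (fun ζ : (Fin (n₁+1) → ℝ) × (Fin (n₂+1) → ℝ) × (Fin ns → ℝ) =>
      (ζ.1, ζ.2.2)) '' Z₀ ⊆ Z01)
    (hZ₂ : (fun ζ : (Fin (n₁+1) → ℝ) × (Fin (n₂+1) → ℝ) × (Fin ns → ℝ) =>
      (ζ.2.1, ζ.2.2)) '' Z ⊆ Z₂)
    (hZ02 : (fun ζ : (Fin (n₁+1) → ℝ) × (Fin (n₂+1) → ℝ) × (Fin ns → ℝ) =>
      (ζ.2.1, ζ.2.2)) '' Z₀ ⊆ Z02)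
    (f₁ g₁ : ℝ × (Fin (n₁+1) → ℝ) × (Fin ns → ℝ) × (Fin m → ℝ) → (Fin (n₁+1) → ℝ))
    (f₂ g₂ : ℝ × (Fin (n₂+1) → ℝ) × (Fin ns → ℝ) × (Fin m → ℝ) → (Fin (n₂+1) → ℝ))
    (fs gs : ℝ × (Fin ns → ℝ) × (Fin m → ℝ) → (Fin ns → ℝ))
    (hf₁ : Continuous f₁) (hg₁ : Continuous g₁)
    (hf₂ : Continuous f₂) (hg₂ : Continuous g₂)
    (hfs : Continuous fs) (hgs : Continuous gs)
    (v₁ : ℝ × ((Fin (n₁+1) → ℝ) × (Fin ns → ℝ)) × (Fin m → ℝ) → ℝ)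
    (v₂ : ℝ × ((Fin (n₂+1) → ℝ) × (Fin ns → ℝ)) × (Fin m → ℝ) → ℝ)
    (hv₁ : SubsysDissipation T Z₁ Z01 K f₁ g₁ fs gs v₁)
    (hv₂ : SubsysDissipation T Z₂ Z02 K f₂ g₂ fs gs v₂)
    (wr : (ℝ × ℝ) × (Fin m → ℝ) → ℝ)
    (hwr : ∀ t ∈ Icc (0:ℝ) T, ∀ ζ ∈ Z, ∀ k ∈ K,
      v₁ (t, (ζ.1, ζ.2.2), k) ≤ 0 → v₂ (t, (ζ.2.1, ζ.2.2), k) ≤ 0 →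
      1 ≤ wr ((ζ.1 0, ζ.2.1 0), k)) :
    ∀ k ∈ K, ∀ ζ : ℝ → (Fin (n₁+1) → ℝ) × (Fin (n₂+1) → ℝ) × (Fin ns → ℝ),
      IsAdmissibleFull T Z Z₀ f₁ g₁ f₂ g₂ fs gs k ζ →
      ∀ τ ∈ Icc (0:ℝ) T, 1 ≤ wr (((ζ τ).1 0, (ζ τ).2.1 0), k) := by
  intro k hk ζ hadm τ hτ
  obtain ⟨hZmem, hZ0mem, d, hdmeas, hd1, hd2, hd3, hint1, hint2, hint3,
    hrep1, hrep2, hrep3⟩ := hadm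
  obtain ⟨hv₁C, hv₁diss, hv₁0⟩ := hv₁
  obtain ⟨hv₂C, hv₂diss, hv₂0⟩ := hv₂
  have h1 : v₁ (τ, ((ζ τ).1, (ζ τ).2.2), k) ≤ 0 := by
    refine subsys_nonpos hT Z₁ f₁ g₁ fs gs hf₁ hg₁ hfs hgs v₁ hv₁C k
      (fun t ht zi zss hz δi δs hδi hδs => hv₁diss t ht zi zss hz k hk δi δs hδi hδs)
      (fun t => (ζ t).1) (fun t => (ζ t).2.2)
      (fun t ht => hZ₁ ⟨ζ t, hZmem t ht, rfl⟩)
      (fun t => (d t).1) (fun t => (d t).2.2)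
      (fun t i => hd1 t i) (fun t i => hd3 t i)
      hint1 hint3 hrep1 hrep3
      (hv₁0 ((ζ 0).1, (ζ 0).2.2) (hZ01 ⟨ζ 0, hZ0mem, rfl⟩) k hk) τ hτ
  have h2 : v₂ (τ, ((ζ τ).2.1, (ζ τ).2.2), k) ≤ 0 := by
    refine subsys_nonpos hT Z₂ f₂ g₂ fs gs hf₂ hg₂ hfs hgs v₂ hv₂C k
      (fun t ht zi zss hz δi δs hδi hδs => hv₂diss t ht zi zss hz k hk δi δs hδi hδs)
      (fun t => (ζ t).2.1) (fun t => (ζ t).2.2)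
      (fun t ht => hZ₂ ⟨ζ t, hZmem t ht, rfl⟩)
      (fun t => (d t).2.1) (fun t => (d t).2.2)
      (fun t i => hd2 t i) (fun t i => hd3 t i)
      hint2 hint3 hrep2 hrep3
      (hv₂0 ((ζ 0).2.1, (ζ 0).2.2) (hZ02 ⟨ζ 0, hZ0mem, rfl⟩) k hk) τ hτ
  exact hwr τ hτ (ζ τ) (hZmem τ hτ) k hk h1 h2
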